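/- For every rational (or real) number $x$, every integer $n \ge 0$ and every rational number $a$, the Vandermonde-type identity $\sum_{k=0}^{n} \binom{x-n+k}{k} \binom{n-k+a}{n-k} = \binom{x+a+1}{n}$ holds, where $\binom{y}{j}$ denotes the generalized binomial coefficient. -/
import Mathlib


/-- The generalized binomial coefficient `x(x-1)⋯(x-k+1)/k!` for `x : ℚ`. -/
noncomputable def gbinom (x : ℚ) (k : ℕ) : ℚ :=
  (∏ j ∈ Finset.range k, (x - j)) / k.factorial

lemma fact_ne (k : ℕ) : ((k.factorial : ℚ)) ≠ 0 := by
  exact_mod_cast k.factorial_ne_zero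

lemma gbinom_zero (x : ℚ) : gbinom x 0 = 1 := by simp [gbinom]

lemma gbinom_pascal (y : ℚ) (k : ℕ) :
    gbinom (y + 1) (k + 1) = gbinom y (k + 1) + gbinom y k := by
  unfold gbinom
  rw [Finset.prod_range_succ' (fun j => y + 1 - (j : ℚ)),
    Finset.prod_range_succ (fun j => y - (j : ℚ))]
  have h : (∏ j ∈ Finset.range k, (y + 1 - ((j : ℚ) + 1)))
      = ∏ j ∈ Finset.range k, (y - (j : ℚ)) := by
    apply Finset.prod_congr rfl; intro j _; push_cast; ring
  push_cast
  rw [h]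
  have h1 : ((k + 1).factorial : ℚ) = (k + 1) * k.factorial := by
    push_cast [Nat.factorial_succ]; ring
  rw [h1]
  have hk := fact_ne k
  field_simp
  ring

lemma gbinom_self (m : ℕ) : gbinom (m : ℚ) m = 1 := by
  induction m with
  | zero => simp [gbinom]
  | succ m ih =>
    unfold gbinom at *
    push_cast
    rw [Finset.prod_range_succ' (fun j => ((m : ℚ) + 1) - (j : ℚ))]
    have h : (∏ j ∈ Finset.range m, ((m : ℚ) + 1 - ((j + 1 : ℕ) : ℚ)))
        = ∏ j ∈ Finset.range m, ((m : ℚ) - (j : ℚ)) := by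
      apply Finset.prod_congr rfl; intro j _; push_cast; ring
    rw [h]
    have h1 : ((m + 1).factorial : ℚ) = (m + 1) * m.factorial := by
      push_cast [Nat.factorial_succ]; ring
    push_cast [h1]
    rw [div_eq_one_iff_eq (by positivity)] at ih ⊢
    rw [ih]; ring

lemma gbinom_hockey (n : ℕ) : ∀ x : ℚ,
    ∑ k ∈ Finset.range (n + 1), gbinom (x - n + k) k = gbinom (x + 1) n := by
  induction n with
  | zero => intro x; simp [gbinom]
  | succ n ih =>
    intro x
    rw [Finset.sum_range_succ]
    have h1 : ∑ k ∈ Finset.range (n + 1), gbinom (x - (n + 1 : ℕ) + k) k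
        = ∑ k ∈ Finset.range (n + 1), gbinom ((x - 1) - n + k) k := by
      apply Finset.sum_congr rfl; intro k _; push_cast; ring_nf
    rw [h1, ih (x - 1)]
    have h2 : x - (n + 1 : ℕ) + ((n + 1 : ℕ) : ℚ) = x := by push_cast; ring
    rw [h2]
    have := gbinom_pascal x n
    rw [show (x - 1 + 1 : ℚ) = x by ring]
    linarith [gbinom_pascal x n]

lemma key_nat (b : ℕ) : ∀ n : ℕ, ∀ x : ℚ,
    ∑ k ∈ Finset.range (n + 1),
        gbinom (x - n + k) k * gbinom (((n - k : ℕ) : ℚ) + (b : ℚ)) (n - k)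
      = gbinom (x + b + 1) n := by
  induction b with
  | zero =>
    intro n x
    have h : ∀ k ∈ Finset.range (n + 1),
        gbinom (x - n + k) k * gbinom (((n - k : ℕ) : ℚ) + ((0 : ℕ) : ℚ)) (n - k)
          = gbinom (x - n + k) k := by
      intro k hk
      rw [show (((n - k : ℕ) : ℚ) + ((0 : ℕ) : ℚ)) = ((n - k : ℕ) : ℚ) by push_cast; ring,
        gbinom_self (n - k), mul_one]
    rw [Finset.sum_congr rfl h, gbinom_hockey n x]
    norm_num
  | succ b ihb =>
    intro n
    induction n with
    | zero =>
      intro x; simp [gbinom]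
    | succ n ihn =>
      intro x
      rw [Finset.sum_range_succ]
      have hsplit : ∑ k ∈ Finset.range (n + 1),
          gbinom (x - ((n + 1 : ℕ) : ℚ) + k) k
            * gbinom (((n + 1 - k : ℕ) : ℚ) + ((b + 1 : ℕ) : ℚ)) (n + 1 - k)
        = ∑ k ∈ Finset.range (n + 1),
          (gbinom (x - ((n + 1 : ℕ) : ℚ) + k) k
              * gbinom (((n + 1 - k : ℕ) : ℚ) + ((b : ℕ) : ℚ)) (n + 1 - k)
            + gbinom ((x - 1) - (n : ℚ) + k) k
              * gbinom (((n - k : ℕ) : ℚ) + ((b + 1 : ℕ) : ℚ)) (n - k)) := by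
        refine Finset.sum_congr rfl (fun k hk => ?_)
        have hk' : k ≤ n := Nat.lt_succ_iff.mp (Finset.mem_range.mp hk)
        have hm : n + 1 - k = (n - k) + 1 := by omega
        rw [hm]
        push_cast
        set m := n - k with hmdef
        rw [show ((m : ℚ) + 1 + ((b : ℚ) + 1)) = ((m : ℚ) + (b : ℚ) + 1) + 1 by ring,
          gbinom_pascal ((m : ℚ) + (b : ℚ) + 1) m]
        ring_nf
      rw [hsplit, Finset.sum_add_distrib]
      have hB := ihn (x - 1)
      have hA := ihb (n + 1) x
      rw [Finset.sum_range_succ] at hA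
      have htop1 : gbinom (x - ((n + 1 : ℕ) : ℚ) + ((n + 1 : ℕ) : ℚ)) (n + 1)
          * gbinom (((n + 1 - (n + 1) : ℕ) : ℚ) + ((b : ℕ) : ℚ)) (n + 1 - (n + 1))
          = gbinom x (n + 1) := by
        rw [show x - ((n + 1 : ℕ) : ℚ) + ((n + 1 : ℕ) : ℚ) = x by ring, Nat.sub_self]
        simp [gbinom]
      have htop2 : gbinom (x - ((n + 1 : ℕ) : ℚ) + ((n + 1 : ℕ) : ℚ)) (n + 1)
          * gbinom (((n + 1 - (n + 1) : ℕ) : ℚ) + ((b + 1 : ℕ) : ℚ)) (n + 1 - (n + 1))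
          = gbinom x (n + 1) := by
        rw [show x - ((n + 1 : ℕ) : ℚ) + ((n + 1 : ℕ) : ℚ) = x by ring, Nat.sub_self]
        simp [gbinom]
      rw [htop1] at hA
      rw [htop2]
      have hpas := gbinom_pascal (x + (b : ℚ) + 1) n
      -- normalize arguments
      have e1 : x + ((b + 1 : ℕ) : ℚ) + 1 = (x + (b : ℚ) + 1) + 1 := by push_cast; ring
      have e2 : (x - 1) + ((b + 1 : ℕ) : ℚ) + 1 = x + (b : ℚ) + 1 := by push_cast; ring
      rw [e2] at hB
      rw [e1, hpas, hB, ← hA]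
      ring

noncomputable def gbinomPoly (c : ℚ) (k : ℕ) : Polynomial ℚ :=
  Polynomial.C (1 / (k.factorial : ℚ)) * ∏ j ∈ Finset.range k, (Polynomial.X + Polynomial.C (c - j))

lemma gbinomPoly_eval (c t : ℚ) (k : ℕ) : (gbinomPoly c k).eval t = gbinom (t + c) k := by
  unfold gbinomPoly gbinom
  rw [Polynomial.eval_mul, Polynomial.eval_C, Polynomial.eval_prod]
  have h : ∀ j ∈ Finset.range k,
      (Polynomial.X + Polynomial.C (c - (j : ℚ))).eval t = t + c - j := by
    intro j _; simp; ring
  rw [Finset.prod_congr rfl h]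
  ring

/-- Vandermonde-type identity:
`∑_{k=0}^n (x-n+k choose k)(n-k+a choose n-k) = (x+a+1 choose n)`. -/
theorem stmt_3 (x a : ℚ) (n : ℕ) :
    ∑ k ∈ Finset.range (n + 1),
        gbinom (x - n + k) k * gbinom (((n - k : ℕ) : ℚ) + a) (n - k)
      = gbinom (x + a + 1) n := by
  set p : Polynomial ℚ :=
    (∑ k ∈ Finset.range (n + 1),
        Polynomial.C (gbinom (x - n + k) k) * gbinomPoly (((n - k : ℕ) : ℚ)) (n - k))
      - gbinomPoly (x + 1) n with hp
  have heval : ∀ t : ℚ, p.eval t =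
      (∑ k ∈ Finset.range (n + 1),
          gbinom (x - n + k) k * gbinom (t + ((n - k : ℕ) : ℚ)) (n - k))
        - gbinom (t + (x + 1)) n := by
    intro t
    simp [hp, Polynomial.eval_finset_sum, gbinomPoly_eval]
  have hroot : ∀ b : ℕ, p.IsRoot (b : ℚ) := by
    intro b
    have hkey := key_nat b n x
    rw [Polynomial.IsRoot, heval]
    have hc : ∀ k ∈ Finset.range (n + 1),
        gbinom (x - n + k) k * gbinom ((b : ℚ) + ((n - k : ℕ) : ℚ)) (n - k)
          = gbinom (x - n + k) k * gbinom (((n - k : ℕ) : ℚ) + (b : ℚ)) (n - k) := by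
      intro k _; rw [add_comm (b : ℚ)]
    rw [Finset.sum_congr rfl hc, hkey, show ((b : ℚ) + (x + 1)) = x + b + 1 by ring,
      sub_self]
  have hzero : p = 0 := by
    apply Polynomial.eq_zero_of_infinite_isRoot
    apply Set.infinite_of_injective_forall_mem (f := fun b : ℕ => (b : ℚ))
    · exact Nat.cast_injective
    · exact hroot
  have hfin := heval a
  rw [hzero, Polynomial.eval_zero] at hfin
  have hc2 : ∀ k ∈ Finset.range (n + 1),
      gbinom (x - n + k) k * gbinom (((n - k : ℕ) : ℚ) + a) (n - k)
        = gbinom (x - n + k) k * gbinom (a + ((n - k : ℕ) : ℚ)) (n - k) := by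
    intro k _; rw [add_comm a]
  rw [Finset.sum_congr rfl hc2, show (x + a + 1 : ℚ) = a + (x + 1) by ring]
  linarith
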